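/- Let N ≥ 1 and η > 0. If numbers Q(i) satisfy Q(i) < Q*(i) + η/N² for all i = 1,…,N with Q*(i) = lg((N+i)/(N+i−1)), then for any κ_s = ⌈lg(N/N_s)⌉ (with N_s ≤ N) the tail sum Σ_{i=2^{κ_s}N_s−N+1}^N Q(i) is less than (1 − κ_s + lg(N/N_s)) + η/N; consequently, the average code length L = Σ_s p(s)(κ_s − 1 + \tilde{Q}_s) satisfies L < H(p) + D(p‖q) + η/N. -/

import Mathlib

open Real

/-- Lemma 2 (case (26)): if `Q(i) < Q*(i) + η/N²` for all states, then each tail sum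
exceeds the optimal tail mass by less than `η/N`, and the average code length
satisfies `L < H(p) + D(p‖q) + η/N`. -/
theorem stmt14 {S : Type*} [Fintype S] (p : S → ℝ) (hp : ∀ s, 0 < p s)
    (hsum : ∑ s, p s = 1) (Ns : S → ℕ) (hNs : ∀ s, 1 ≤ Ns s)
    (N : ℕ) (hN : N = ∑ s, Ns s) (hN1 : 1 ≤ N)
    (κ : S → ℕ) (hκ : ∀ s, κ s = ⌈logb 2 ((N:ℝ)/(Ns s:ℝ))⌉₊)
    (η : ℝ) (hη : 0 < η) (Q : ℕ → ℝ)
    (hQ : ∀ i ∈ Finset.Icc 1 N,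
      Q i < logb 2 (((N:ℝ) + i)/((N:ℝ) + i - 1)) + η/(N:ℝ)^2) :
    (∀ s : S, ∑ i ∈ Finset.Icc (2^(κ s) * Ns s - N + 1) N, Q i
        < (1 - (κ s : ℝ) + logb 2 ((N:ℝ)/(Ns s:ℝ))) + η/(N:ℝ)) ∧
    ∑ s, p s * ((κ s : ℝ) - 1 + ∑ i ∈ Finset.Icc (2^(κ s) * Ns s - N + 1) N, Q i)
      < (-∑ s, p s * logb 2 (p s)) + (∑ s, p s * logb 2 (p s / ((Ns s : ℝ)/(N:ℝ))))
        + η/(N:ℝ) := by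
  have hNpos : (0:ℝ) < N := by exact_mod_cast hN1
  have key : ∀ s : S, ∑ i ∈ Finset.Icc (2^(κ s) * Ns s - N + 1) N, Q i
      < (1 - (κ s : ℝ) + logb 2 ((N:ℝ)/(Ns s:ℝ))) + η/(N:ℝ) := by
    intro s
    have hns1 : 1 ≤ Ns s := hNs s
    have hnspos : (0:ℝ) < (Ns s : ℝ) := by exact_mod_cast hns1
    have hnsN : Ns s ≤ N := by
      rw [hN]
      exact Finset.single_le_sum (fun t _ => Nat.zero_le _) (Finset.mem_univ s)
    have hx1 : (1:ℝ) ≤ (N:ℝ)/(Ns s:ℝ) := by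
      rw [le_div_iff₀ hnspos, one_mul]
      exact_mod_cast hnsN
    have hxpos : (0:ℝ) < (N:ℝ)/(Ns s:ℝ) := lt_of_lt_of_le one_pos hx1
    set K := 2^(κ s) * Ns s with hK
    -- N ≤ K
    have hNK : N ≤ K := by
      have h1 : logb 2 ((N:ℝ)/(Ns s:ℝ)) ≤ (κ s : ℝ) := by
        rw [hκ s]; exact Nat.le_ceil _
      have h2 : (N:ℝ)/(Ns s:ℝ) ≤ (2:ℝ)^(κ s) := by
        calc (N:ℝ)/(Ns s:ℝ) = (2:ℝ) ^ (logb 2 ((N:ℝ)/(Ns s:ℝ))) :=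
              (Real.rpow_logb two_pos (by norm_num) hxpos).symm
          _ ≤ (2:ℝ) ^ ((κ s : ℝ)) := by
              exact Real.rpow_le_rpow_of_exponent_le one_le_two h1
          _ = (2:ℝ)^(κ s) := by rw [Real.rpow_natCast]
      have h3 : (N:ℝ) ≤ (2:ℝ)^(κ s) * (Ns s:ℝ) := by
        rw [div_le_iff₀ hnspos] at h2; exact h2
      have : (N:ℝ) ≤ (K:ℝ) := by
        rw [hK]; push_cast; exact h3
      exact_mod_cast this
    -- K < 2 * N
    have hK2N : K < 2 * N := by
      rcases Nat.eq_zero_or_pos (κ s) with h0 | hpos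
      · rw [hK, h0, pow_zero, one_mul]
        omega
      · obtain ⟨m, hm⟩ : ∃ m, κ s = m + 1 := ⟨κ s - 1, by omega⟩
        have hmlt : (m:ℝ) < logb 2 ((N:ℝ)/(Ns s:ℝ)) := by
          have : m < ⌈logb 2 ((N:ℝ)/(Ns s:ℝ))⌉₊ := by rw [← hκ s]; omega
          exact Nat.lt_ceil.mp this
        have h2 : (2:ℝ)^m < (N:ℝ)/(Ns s:ℝ) := by
          calc (2:ℝ)^m = (2:ℝ) ^ ((m:ℝ)) := by rw [Real.rpow_natCast]
            _ < (2:ℝ) ^ (logb 2 ((N:ℝ)/(Ns s:ℝ))) :=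
                Real.rpow_lt_rpow_of_exponent_lt one_lt_two hmlt
            _ = (N:ℝ)/(Ns s:ℝ) := Real.rpow_logb two_pos (by norm_num) hxpos
        have h3 : (2:ℝ)^m * (Ns s:ℝ) < (N:ℝ) := by
          rw [← lt_div_iff₀ hnspos]; exact h2
        have h4 : 2^m * Ns s < N := by
          have : ((2^m * Ns s : ℕ):ℝ) < (N:ℝ) := by push_cast; exact h3
          exact_mod_cast this
        rw [hK, hm, pow_succ, mul_comm ((2:ℕ)^m) 2, mul_assoc]
        omega
    -- the interval
    set a := K - N + 1 with ha
    have ha1 : 1 ≤ a := by omega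
    have haN : a ≤ N := by omega
    have hKa : N + (a - 1) = K := by omega
    -- strict bound by optimal + error
    have hne : (Finset.Icc a N).Nonempty := ⟨a, Finset.mem_Icc.mpr ⟨le_refl a, haN⟩⟩
    have hstep : ∑ i ∈ Finset.Icc a N, Q i
        < ∑ i ∈ Finset.Icc a N, (logb 2 (((N:ℝ)+i)/((N:ℝ)+i-1)) + η/(N:ℝ)^2) := by
      apply Finset.sum_lt_sum_of_nonempty hne
      intro i hi
      rw [Finset.mem_Icc] at hi
      exact hQ i (Finset.mem_Icc.mpr ⟨le_trans ha1 hi.1, hi.2⟩)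
    rw [Finset.sum_add_distrib, Finset.sum_const, Nat.card_Icc, nsmul_eq_mul] at hstep
    -- telescoping
    have htel : ∑ i ∈ Finset.Icc a N, logb 2 (((N:ℝ)+i)/((N:ℝ)+i-1))
        = logb 2 (2*(N:ℝ)) - logb 2 ((K:ℝ)) := by
      have : ∀ i ∈ Finset.Icc a N,
          logb 2 (((N:ℝ)+i)/((N:ℝ)+i-1))
            = logb 2 ((N:ℝ) + i) - logb 2 ((N:ℝ) + (i-1 : ℕ)) := by
        intro i hi
        rw [Finset.mem_Icc] at hi
        have hi1 : 1 ≤ i := le_trans ha1 hi.1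
        have hc : ((i - 1 : ℕ):ℝ) = (i:ℝ) - 1 :=
          Nat.cast_pred (by omega)
        have h1 : (0:ℝ) < (N:ℝ) + i := by positivity
        have h2 : (0:ℝ) < (N:ℝ) + i - 1 := by
          have : (1:ℝ) ≤ (i:ℝ) := by exact_mod_cast hi1
          linarith
        rw [Real.logb_div (by linarith) (by linarith), hc]
        ring_nf
      rw [Finset.sum_congr rfl this]
      have hIcc : Finset.Icc a N = Finset.Ico a (N+1) := by
        rw [← Finset.Ico_add_one_right_eq_Icc]
      rw [hIcc, Finset.sum_Ico_eq_sum_range]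
      have hre : ∀ j, logb 2 ((N:ℝ) + ((a + j) : ℕ)) - logb 2 ((N:ℝ) + ((a + j - 1) : ℕ))
          = (fun j => logb 2 ((N:ℝ) + ((a - 1 + j : ℕ)))) (j+1)
            - (fun j => logb 2 ((N:ℝ) + ((a - 1 + j : ℕ)))) j := by
        intro j
        have h1 : a + j - 1 = a - 1 + j := by omega
        have h2 : a + j = a - 1 + (j + 1) := by omega
        simp only [h1]
        rw [h2]
      calc ∑ j ∈ Finset.range (N + 1 - a),
            (logb 2 ((N:ℝ) + ((a + j):ℕ)) - logb 2 ((N:ℝ) + ((a + j - 1):ℕ)))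
          = ∑ j ∈ Finset.range (N + 1 - a),
            ((fun j => logb 2 ((N:ℝ) + ((a - 1 + j : ℕ)))) (j+1)
              - (fun j => logb 2 ((N:ℝ) + ((a - 1 + j : ℕ)))) j) := by
            apply Finset.sum_congr rfl; intro j _; exact hre j
        _ = logb 2 ((N:ℝ) + ((a - 1 + (N + 1 - a) : ℕ)))
              - logb 2 ((N:ℝ) + ((a - 1 + 0 : ℕ))) :=
            Finset.sum_range_sub (fun j => logb 2 ((N:ℝ) + ((a - 1 + j : ℕ)))) (N + 1 - a)
        _ = logb 2 (2*(N:ℝ)) - logb 2 ((K:ℝ)) := by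
            have e1 : a - 1 + (N + 1 - a) = N := by omega
            have e2 : a - 1 + 0 = a - 1 := by omega
            rw [e1, e2]
            congr 1
            · push_cast; ring
            · congr 1
              have : (N : ℝ) + ((a-1 : ℕ):ℝ) = ((N + (a-1) : ℕ) : ℝ) := by push_cast; ring
              rw [this, hKa]
      -- end telescoping
    -- simplify the log expression
    have hlog : logb 2 (2*(N:ℝ)) - logb 2 ((K:ℝ))
        = 1 - (κ s : ℝ) + logb 2 ((N:ℝ)/(Ns s:ℝ)) := by
      have hKr : ((K:ℕ):ℝ) = (2:ℝ)^(κ s) * (Ns s : ℝ) := by rw [hK]; push_cast; ring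
      rw [hKr, Real.logb_mul (by norm_num) (by positivity),
        Real.logb_mul (by positivity) (by positivity),
        Real.logb_div (by positivity) (by positivity),
        Real.logb_pow]
      have h22 : logb 2 2 = 1 := by simp
      rw [h22]
      ring
    -- error bound
    have hcard : ((N + 1 - a : ℕ) : ℝ) ≤ (N:ℝ) := by
      have : N + 1 - a ≤ N := by omega
      exact_mod_cast this
    have herr : ((N + 1 - a : ℕ) : ℝ) * (η/(N:ℝ)^2) ≤ η/(N:ℝ) := by
      have h1 : ((N + 1 - a : ℕ) : ℝ) * (η/(N:ℝ)^2) ≤ (N:ℝ) * (η/(N:ℝ)^2) := by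
        apply mul_le_mul_of_nonneg_right hcard (by positivity)
      have h2 : (N:ℝ) * (η/(N:ℝ)^2) = η/(N:ℝ) := by
        field_simp
      linarith
    calc ∑ i ∈ Finset.Icc a N, Q i
        < ∑ i ∈ Finset.Icc a N, logb 2 (((N:ℝ)+i)/((N:ℝ)+i-1))
            + ((N + 1 - a : ℕ) : ℝ) * (η/(N:ℝ)^2) := hstep
      _ ≤ (logb 2 (2*(N:ℝ)) - logb 2 ((K:ℝ))) + η/(N:ℝ) := by
          rw [htel]; linarith
      _ = (1 - (κ s : ℝ) + logb 2 ((N:ℝ)/(Ns s:ℝ))) + η/(N:ℝ) := by rw [hlog]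
  refine ⟨key, ?_⟩
  -- second part
  have hSne : (Finset.univ : Finset S).Nonempty := by
    by_contra h
    rw [Finset.not_nonempty_iff_eq_empty] at h
    rw [h, Finset.sum_empty] at hsum
    norm_num at hsum
  have hL : ∑ s, p s * ((κ s : ℝ) - 1 + ∑ i ∈ Finset.Icc (2^(κ s) * Ns s - N + 1) N, Q i)
      < ∑ s, p s * (logb 2 ((N:ℝ)/(Ns s:ℝ)) + η/(N:ℝ)) := by
    apply Finset.sum_lt_sum_of_nonempty hSne
    intro s _
    apply mul_lt_mul_of_pos_left _ (hp s)
    have := key s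
    linarith
  have hre : ∑ s, p s * (logb 2 ((N:ℝ)/(Ns s:ℝ)) + η/(N:ℝ))
      = (-∑ s, p s * logb 2 (p s)) + (∑ s, p s * logb 2 (p s / ((Ns s : ℝ)/(N:ℝ))))
        + η/(N:ℝ) := by
    have h1 : ∀ s : S, p s * (logb 2 ((N:ℝ)/(Ns s:ℝ)) + η/(N:ℝ))
        = (- (p s * logb 2 (p s)) + p s * logb 2 (p s / ((Ns s : ℝ)/(N:ℝ))))
          + p s * (η/(N:ℝ)) := by
      intro s
      have hnspos : (0:ℝ) < (Ns s : ℝ) := by exact_mod_cast hNs s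
      have hq : (Ns s : ℝ)/(N:ℝ) ≠ 0 := by positivity
      rw [Real.logb_div (ne_of_gt (hp s)) hq]
      have : logb 2 ((N:ℝ)/(Ns s:ℝ)) = - logb 2 ((Ns s : ℝ)/(N:ℝ)) := by
        rw [← Real.logb_inv]
        congr 1
        field_simp
      rw [this]; ring
    rw [Finset.sum_congr rfl (fun s _ => h1 s), Finset.sum_add_distrib,
      Finset.sum_add_distrib, ← Finset.sum_neg_distrib, ← Finset.sum_mul, hsum, one_mul]
  linarith
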